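/- (Off-diagonal matrix element in the adiabatic theorem) Let N : ℕ and let H : ℝ → Matrix (Fin N) (Fin N) ℂ, v w : ℝ → EuclideanSpace ℂ (Fin N), and E F : ℝ → ℝ all be differentiable at t ∈ ℝ, with H differentiable in each entry. Suppose H(t) is Hermitian, H(s).mulVec (v s) = E s • v s and H(s).mulVec (w s) = F s • w s for all s in a neighborhood of t, and ⟨v t, w t⟩ = 0. Then ⟨v t, (deriv H t).mulVec (w t)⟩ = (F t − E t) * ⟨v t, deriv w t⟩, where deriv H t is the entrywise derivative. In words: for two instantaneous eigenvector families of a time-dependent Hermitian Hamiltonian belonging to different eigenvalues, the matrix element of dH/dt between them equals the energy gap times ⟨n|ṁ⟩. -/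

import Mathlib

open Matrix

/-- **Off-diagonal matrix element in the adiabatic theorem**: for two
instantaneous eigenvector families `v, w` of a time-dependent Hermitian
Hamiltonian `H` with eigenvalues `E, F`, orthogonal at time `t`, the matrix
element of `dH/dt` between them equals the energy gap times `⟨v, ẇ⟩`. -/
theorem adiabatic_offdiagonal (N : ℕ) (H : ℝ → Matrix (Fin N) (Fin N) ℂ)
    (v w : ℝ → EuclideanSpace ℂ (Fin N)) (E F : ℝ → ℝ) (t : ℝ)
    (hH : ∀ i j, DifferentiableAt ℝ (fun s => H s i j) t)
    (hv : DifferentiableAt ℝ v t) (hw : DifferentiableAt ℝ w t)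
    (hE : DifferentiableAt ℝ E t) (hF : DifferentiableAt ℝ F t)
    (hherm : (H t).IsHermitian)
    (heigv : ∀ᶠ s in nhds t, (H s).mulVec (v s) = (E s : ℂ) • v s)
    (heigw : ∀ᶠ s in nhds t, (H s).mulVec (w s) = (F s : ℂ) • w s)
    (horth : inner (𝕜 := ℂ) (v t) (w t) = 0) :
    inner (𝕜 := ℂ) (v t)
        ((WithLp.toLp 2 ((Matrix.of fun i j => deriv (fun s => H s i j) t).mulVec (w t)) :
          EuclideanSpace ℂ (Fin N)))
      = ((F t - E t : ℝ) : ℂ) * inner (𝕜 := ℂ) (v t) (deriv w t) := by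
  classical
  set w' : EuclideanSpace ℂ (Fin N) := deriv w t with hw'def
  -- component derivatives of w
  have hwc : ∀ j, HasDerivAt (fun s => w s j) (w' j) t := by
    intro j
    have := ((EuclideanSpace.proj j : EuclideanSpace ℂ (Fin N) →L[ℂ] ℂ).restrictScalars
        ℝ).hasFDerivAt.comp_hasDerivAt t hw.hasDerivAt
    exact this
  have hFc : HasDerivAt (fun s => (F s : ℂ)) ((deriv F t : ℝ) : ℂ) t :=
    hF.hasDerivAt.ofReal_comp
  -- differentiate the eigenvalue equation componentwise
  have key : ∀ i, (∑ j, (deriv (fun s => H s i j) t * w t j + H t i j * w' j))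
      = ((deriv F t : ℝ) : ℂ) * w t i + (F t : ℂ) * w' i := by
    intro i
    have hf : HasDerivAt (fun s => ∑ j, H s i j * w s j)
        (∑ j, (deriv (fun s => H s i j) t * w t j + H t i j * w' j)) t :=
      HasDerivAt.fun_sum fun j _ => ((hH i j).hasDerivAt.mul (hwc j))
    have hg : HasDerivAt (fun s => (F s : ℂ) * w s i)
        (((deriv F t : ℝ) : ℂ) * w t i + (F t : ℂ) * w' i) t := hFc.mul (hwc i)
    have heq : (fun s => ∑ j, H s i j * w s j) =ᶠ[nhds t] fun s => (F s : ℂ) * w s i := by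
      filter_upwards [heigw] with s hs
      have := congrFun hs i
      simpa [Matrix.mulVec, dotProduct] using this
    exact hf.unique (hg.congr_of_eventuallyEq heq)
  -- take the inner product with v t
  have hsum : inner (𝕜 := ℂ) (v t)
        ((WithLp.toLp 2 ((Matrix.of fun i j => deriv (fun s => H s i j) t).mulVec (w t)) :
          EuclideanSpace ℂ (Fin N)))
      + inner (𝕜 := ℂ) (v t) ((WithLp.toLp 2 ((H t).mulVec w') : EuclideanSpace ℂ (Fin N)))
      = ((deriv F t : ℝ) : ℂ) * inner (𝕜 := ℂ) (v t) (w t)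
      + (F t : ℂ) * inner (𝕜 := ℂ) (v t) w' := by
    simp only [PiLp.inner_apply, RCLike.inner_apply', Matrix.mulVec, dotProduct,
      PiLp.toLp_apply, Matrix.of_apply, Finset.mul_sum, ← Finset.sum_add_distrib]
    refine Finset.sum_congr rfl fun i _ => ?_
    have := key i
    calc (∑ j, (starRingEnd ℂ (v t i) * (deriv (fun s => H s i j) t * w t j)
            + starRingEnd ℂ (v t i) * (H t i j * w' j)))
        = starRingEnd ℂ (v t i) *
            (∑ j, (deriv (fun s => H s i j) t * w t j + H t i j * w' j)) := by
          rw [Finset.mul_sum]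
          refine Finset.sum_congr rfl fun j _ => by ring
      _ = starRingEnd ℂ (v t i) * (((deriv F t : ℝ) : ℂ) * w t i + (F t : ℂ) * w' i) := by
          rw [this]
      _ = _ := by ring
  -- hermiticity: ⟨v, H w'⟩ = E ⟨v, w'⟩
  have hsym : ((H t).toEuclideanLin).IsSymmetric :=
    Matrix.isHermitian_iff_isSymmetric.mp hherm
  have hHv : (H t).mulVec (v t) = (E t : ℂ) • v t := heigv.self_of_nhds
  have hEterm : inner (𝕜 := ℂ) (v t) ((WithLp.toLp 2 ((H t).mulVec w') : EuclideanSpace ℂ (Fin N)))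
      = (E t : ℂ) * inner (𝕜 := ℂ) (v t) w' := by
    have h1 : inner (𝕜 := ℂ) (v t) ((H t).toEuclideanLin w')
        = inner (𝕜 := ℂ) ((H t).toEuclideanLin (v t)) w' := (hsym (v t) w').symm
    have h2 : (H t).toEuclideanLin w' = (WithLp.toLp 2 ((H t).mulVec w') : EuclideanSpace ℂ (Fin N)) := rfl
    have h3 : (H t).toEuclideanLin (v t) = (WithLp.toLp 2 ((H t).mulVec (v t)) : EuclideanSpace ℂ (Fin N)) := rfl
    rw [h2, h3, hHv] at h1
    rw [WithLp.toLp_smul, WithLp.toLp_ofLp] at h1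
    rw [h1, inner_smul_left]
    simp
  rw [horth, hEterm] at hsum
  have : inner (𝕜 := ℂ) (v t)
        ((WithLp.toLp 2 ((Matrix.of fun i j => deriv (fun s => H s i j) t).mulVec (w t)) :
          EuclideanSpace ℂ (Fin N)))
      = (F t : ℂ) * inner (𝕜 := ℂ) (v t) w' - (E t : ℂ) * inner (𝕜 := ℂ) (v t) w' := by
    linear_combination hsum
  rw [this]
  push_cast
  ring
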